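/- Let g and w be independent standard Gaussian random variables, let ρ ∈ [-1,1], q = √(1-ρ²), and ĝ = ρg + qw. With φ(x) = max(x,0) the ReLU function, E[ φ(g)² φ(ĝ)² ] = ( 3ρq + arccos(-ρ)·(1 + 2ρ²) ) / (2π). -/

import Mathlib

open MeasureTheory ProbabilityTheory Real

open scoped ENNReal NNReal

open Filter



lemma gauss_prod_eq :
    (gaussianReal 0 1).prod (gaussianReal 0 1)
      = (volume : Measure (ℝ × ℝ)).withDensity
          (fun p => gaussianPDF 0 1 p.1 * gaussianPDF 0 1 p.2) := by

  refine Measure.prod_eq fun s t hs ht => ?_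
  rw [withDensity_apply _ (hs.prod ht), Measure.volume_eq_prod, ← Measure.prod_restrict,
    lintegral_prod_mul (measurable_gaussianPDF 0 1).aemeasurable
      (measurable_gaussianPDF 0 1).aemeasurable,
    gaussianReal_apply 0 one_ne_zero s, gaussianReal_apply 0 one_ne_zero t]

lemma integral_gauss_prod (F : ℝ × ℝ → ℝ) :
    ∫ p, F p ∂((gaussianReal 0 1).prod (gaussianReal 0 1))
      = ∫ p : ℝ × ℝ, (gaussianPDFReal 0 1 p.1 * gaussianPDFReal 0 1 p.2) * F p := by
  rw [gauss_prod_eq]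
  have hd : (fun p : ℝ × ℝ => gaussianPDF 0 1 p.1 * gaussianPDF 0 1 p.2)
      = fun p : ℝ × ℝ =>
        ((((gaussianPDFReal 0 1 p.1).toNNReal * (gaussianPDFReal 0 1 p.2).toNNReal : ℝ≥0)) : ℝ≥0∞) := by
    funext p
    rw [ENNReal.coe_mul]
    rfl
  have hm : Measurable fun p : ℝ × ℝ =>
      ((gaussianPDFReal 0 1 p.1).toNNReal * (gaussianPDFReal 0 1 p.2).toNNReal : ℝ≥0) :=
    (measurable_real_toNNReal.comp ((measurable_gaussianPDFReal 0 1).comp measurable_fst)).mul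
      (measurable_real_toNNReal.comp ((measurable_gaussianPDFReal 0 1).comp measurable_snd))
  rw [hd, integral_withDensity_eq_integral_smul hm F]
  congr 1
  funext p
  rw [NNReal.smul_def, NNReal.coe_mul, Real.coe_toNNReal _ (gaussianPDFReal_nonneg _ _ _),
    Real.coe_toNNReal _ (gaussianPDFReal_nonneg _ _ _), smul_eq_mul]

lemma pdf_prod (x y : ℝ) : gaussianPDFReal 0 1 x * gaussianPDFReal 0 1 y
    = (2*π)⁻¹ * Real.exp (-(1/2:ℝ) * (x^2 + y^2)) := by
  have h2π : (0:ℝ) ≤ 2*π := by positivity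
  simp only [gaussianPDFReal, NNReal.coe_one, mul_one]
  rw [mul_mul_mul_comm, ← Real.exp_add, ← mul_inv, Real.mul_self_sqrt h2π]
  congr 1
  ring_nf



lemma radial_int : ∫ x in Set.Ioi (0:ℝ), x ^ 5 * Real.exp (-(1/2:ℝ) * x ^ 2) = 8 := by
  have hint : IntegrableOn (fun x : ℝ => x ^ 5 * Real.exp (-(1/2:ℝ) * x ^ 2)) (Set.Ioi 0) := by
    have h := integrableOn_rpow_mul_exp_neg_mul_sq (b := (1/2:ℝ)) (by norm_num)
      (s := (5:ℝ)) (by norm_num)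
    refine h.congr_fun (fun x hx => ?_) measurableSet_Ioi
    dsimp only
    rw [show ((5:ℝ)) = ((5:ℕ):ℝ) by norm_num, Real.rpow_natCast]
  have hderiv : ∀ x ∈ Set.Ici (0:ℝ),
      HasDerivAt (fun x : ℝ => -(x^4 + 4*x^2 + 8) * Real.exp (-(1/2:ℝ) * x^2))
        (x ^ 5 * Real.exp (-(1/2:ℝ) * x ^ 2)) x := by
    intro x _
    have h1 : HasDerivAt (fun x : ℝ => -(x^4 + 4*x^2 + 8))
        (-(4*x^3 + 4*(2*x))) x := by
      have := ((hasDerivAt_pow 4 x).add ((hasDerivAt_pow 2 x).const_mul (4:ℝ))).add_const (8:ℝ)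
      have h2 : HasDerivAt (fun x : ℝ => -(x^4 + 4*x^2 + 8)) _ x := this.neg
      exact h2.congr_deriv (by norm_num)
    have h2 : HasDerivAt (fun x : ℝ => Real.exp (-(1/2:ℝ) * x^2))
        (Real.exp (-(1/2:ℝ) * x^2) * (-(1/2:ℝ) * (2*x))) x := by
      have hin : HasDerivAt (fun x : ℝ => -(1/2:ℝ) * x^2) (-(1/2:ℝ) * (2*x)) x := by
        have := (hasDerivAt_pow 2 x).const_mul (-(1/2:ℝ))
        exact this.congr_deriv (by norm_num)
      exact hin.exp
    exact (h1.mul h2).congr_deriv (by ring)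
  have htend : Tendsto (fun x : ℝ => -(x^4 + 4*x^2 + 8) * Real.exp (-(1/2:ℝ) * x^2))
      atTop (nhds 0) := by
    have h0 : Tendsto (fun s : ℝ => -((4*s^2 + 8*s + 8) * Real.exp (-s))) atTop (nhds 0) := by
      have t2 := (tendsto_pow_mul_exp_neg_atTop_nhds_zero 2).const_mul (4:ℝ)
      have t1 := (tendsto_pow_mul_exp_neg_atTop_nhds_zero 1).const_mul (8:ℝ)
      have t0 := (tendsto_pow_mul_exp_neg_atTop_nhds_zero 0).const_mul (8:ℝ)
      have := ((t2.add t1).add t0).neg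
      simp only [mul_zero, add_zero, neg_zero] at this
      refine this.congr fun s => ?_
      simp only [pow_one, pow_zero, one_mul]
      ring
    have hcomp : Tendsto (fun x : ℝ => (1/2:ℝ) * x ^ 2) atTop atTop := by
      exact (tendsto_pow_atTop (by norm_num)).const_mul_atTop (by norm_num)
    have := h0.comp hcomp
    refine this.congr fun x => ?_
    simp only [Function.comp_apply]
    rw [show -((1/2:ℝ) * x^2) = -(1/2:ℝ) * x^2 by ring]
    ring
  have := integral_Ioi_of_hasDerivAt_of_tendsto' hderiv hint htend
  rw [this]
  norm_num



lemma angular_int {ρ q α : ℝ} (hq2 : q^2 = 1 - ρ^2) (hcos : Real.cos α = ρ)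
    (hsin : Real.sin α = q) (hα0 : 0 ≤ α) (hαπ : α ≤ π) :
    ∫ θ in Set.Ioo (-π) π,
        (max (Real.cos θ) 0)^2 * (max (ρ * Real.cos θ + q * Real.sin θ) 0)^2
      = ((1 + 2*ρ^2) * (π - α) + 3*ρ*q) / 8 := by
  have hπ : (0:ℝ) < π := Real.pi_pos
  set h : ℝ → ℝ := fun θ =>
    (max (Real.cos θ) 0)^2 * (max (ρ * Real.cos θ + q * Real.sin θ) 0)^2 with hh
  have hcont : Continuous h := by
    apply Continuous.mul
    · exact (continuous_cos.max continuous_const).pow 2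
    · exact (((continuous_const.mul continuous_cos).add
        (continuous_const.mul continuous_sin)).max continuous_const).pow 2
  have hii : ∀ a b : ℝ, IntervalIntegrable h volume a b :=
    fun a b => hcont.intervalIntegrable a b
  have hsub : ∀ θ, ρ * Real.cos θ + q * Real.sin θ = Real.cos (θ - α) := by
    intro θ; rw [Real.cos_sub, hcos, hsin]; ring
  rw [← integral_Ioc_eq_integral_Ioo,
    ← intervalIntegral.integral_of_le (by linarith : -π ≤ π)]
  have e1 : (∫ x in (α - π/2)..(π/2), h x) + (∫ x in (π/2)..π, h x)
      = ∫ x in (α - π/2)..π, h x :=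
    intervalIntegral.integral_add_adjacent_intervals (hii _ _) (hii _ _)
  have e2 : (∫ x in (-π)..(α - π/2), h x) + (∫ x in (α - π/2)..π, h x)
      = ∫ x in (-π)..π, h x :=
    intervalIntegral.integral_add_adjacent_intervals (hii _ _) (hii _ _)
  rw [← e2, ← e1]
  have hz1 : ∫ x in (-π)..(α - π/2), h x = 0 := by
    have hEq : Set.EqOn h 0 (Set.uIcc (-π) (α - π/2)) := by
      rw [Set.uIcc_of_le (by linarith)]
      rintro θ ⟨hθ1, hθ2⟩
      by_cases hc : θ ≤ -(π/2)
      · have : Real.cos θ ≤ 0 := by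
          rw [← Real.cos_neg]
          exact Real.cos_nonpos_of_pi_div_two_le_of_le (by linarith) (by linarith)
        simp [hh, max_eq_right this]
      · have : ρ * Real.cos θ + q * Real.sin θ ≤ 0 := by
          rw [hsub θ, ← Real.cos_neg]
          exact Real.cos_nonpos_of_pi_div_two_le_of_le (by linarith) (by linarith)
        simp [hh, max_eq_right this]
    rw [intervalIntegral.integral_congr hEq]
    simp
  have hz3 : ∫ x in (π/2)..π, h x = 0 := by
    have hEq : Set.EqOn h 0 (Set.uIcc (π/2) π) := by
      rw [Set.uIcc_of_le (by linarith)]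
      rintro θ ⟨hθ1, hθ2⟩
      have : Real.cos θ ≤ 0 :=
        Real.cos_nonpos_of_pi_div_two_le_of_le hθ1 (by linarith)
      simp [hh, max_eq_right this]
    rw [intervalIntegral.integral_congr hEq]
    simp
  have hmid : ∫ x in (α - π/2)..(π/2), h x
      = ((1 + 2*ρ^2) * (π - α) + 3*ρ*q) / 8 := by
    have hle : α - π/2 ≤ π/2 := by linarith
    have hEq : Set.EqOn h
        (fun θ => Real.cos θ^2 * (ρ * Real.cos θ + q * Real.sin θ)^2)
        (Set.uIcc (α - π/2) (π/2)) := by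
      rw [Set.uIcc_of_le hle]
      rintro θ ⟨hθ1, hθ2⟩
      have hc1 : 0 ≤ Real.cos θ := Real.cos_nonneg_of_mem_Icc ⟨by linarith, hθ2⟩
      have hc2 : 0 ≤ ρ * Real.cos θ + q * Real.sin θ := by
        rw [hsub θ]
        exact Real.cos_nonneg_of_mem_Icc ⟨by linarith, by linarith⟩
      simp [hh, max_eq_left hc1, max_eq_left hc2]
    rw [intervalIntegral.integral_congr hEq]
    have hderiv : ∀ x ∈ Set.uIcc (α - π/2) (π/2),
        HasDerivAt (fun θ : ℝ =>
          (ρ^2 - q^2)/4 * (Real.sin θ * Real.cos θ^3)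
          + (3*ρ^2 + q^2)/8 * (θ + Real.sin θ * Real.cos θ)
          + (-(ρ*q)/2) * Real.cos θ^4)
          (Real.cos x^2 * (ρ * Real.cos x + q * Real.sin x)^2) x := by
      intro x _
      have hs := Real.hasDerivAt_sin x
      have hc := Real.hasDerivAt_cos x
      have H := (((hs.mul (hc.pow 3)).const_mul ((ρ^2 - q^2)/4)).add
        (((hasDerivAt_id' (x := x)).add (hs.mul hc)).const_mul ((3*ρ^2 + q^2)/8))).add
        ((hc.pow 4).const_mul (-(ρ*q)/2))
      refine H.congr_deriv (Eq.symm ?_)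
      have hpy := Real.sin_sq_add_cos_sq x
      push_cast [Pi.pow_apply]
      linear_combination (3*((ρ^2 - q^2)/4)*Real.cos x^2 + (3*ρ^2 + q^2)/8
        + q^2*Real.cos x^2) * hpy
    have hcont2 : Continuous fun θ : ℝ =>
        Real.cos θ^2 * (ρ * Real.cos θ + q * Real.sin θ)^2 := by
      apply Continuous.mul
      · exact continuous_cos.pow 2
      · exact ((continuous_const.mul continuous_cos).add
          (continuous_const.mul continuous_sin)).pow 2
    rw [intervalIntegral.integral_eq_sub_of_hasDerivAt hderiv
      (hcont2.intervalIntegrable _ _)]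
    show _ - _ = _
    rw [Real.sin_pi_div_two, Real.cos_pi_div_two, Real.sin_sub_pi_div_two,
      Real.cos_sub_pi_div_two, hcos, hsin]
    have hq4 : q^4 = (1-ρ^2)^2 := by rw [← hq2]; ring
    linear_combination ((π - α)/8 + ρ*q*(ρ^2/4 + 1/8)) * hq2 + (ρ*q/4) * hq4
  rw [hz1, hz3, hmid]
  ring

/-- Cho–Saul kernel `K₂(ρ) = E[φ(g)²φ(ĝ)²]
= (3ρq + arccos(-ρ)(1+2ρ²))/(2π)` for the ReLU `φ(x) = max(x,0)`, where `g, w`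
are independent standard Gaussians, `q = √(1-ρ²)` and `ĝ = ρg + qw`. -/
theorem relu_kernel_K2 (ρ : ℝ) (hρ : ρ ∈ Set.Icc (-1 : ℝ) 1) :
    (∫ p : ℝ × ℝ,
        (max p.1 0) ^ 2 * (max (ρ * p.1 + Real.sqrt (1 - ρ ^ 2) * p.2) 0) ^ 2
      ∂((gaussianReal 0 1).prod (gaussianReal 0 1)))
    = (3 * ρ * Real.sqrt (1 - ρ ^ 2) + Real.arccos (-ρ) * (1 + 2 * ρ ^ 2)) / (2 * π) := by
  obtain ⟨hm1, hp1⟩ := hρ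
  have h1ρ : (0:ℝ) ≤ 1 - ρ^2 := by nlinarith
  have hq0 : 0 ≤ Real.sqrt (1 - ρ^2) := Real.sqrt_nonneg _
  have hq2 : Real.sqrt (1 - ρ^2)^2 = 1 - ρ^2 := Real.sq_sqrt h1ρ
  have hπ : (0:ℝ) < π := Real.pi_pos
  have hcos : Real.cos (Real.arccos ρ) = ρ := Real.cos_arccos hm1 hp1
  have hsin : Real.sin (Real.arccos ρ) = Real.sqrt (1 - ρ^2) := Real.sin_arccos ρ
  have hα0 : 0 ≤ Real.arccos ρ := Real.arccos_nonneg ρ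
  have hαπ : Real.arccos ρ ≤ π := Real.arccos_le_pi ρ
  calc (∫ p : ℝ × ℝ,
        (max p.1 0) ^ 2 * (max (ρ * p.1 + Real.sqrt (1 - ρ ^ 2) * p.2) 0) ^ 2
      ∂((gaussianReal 0 1).prod (gaussianReal 0 1)))
      = ∫ p : ℝ × ℝ, (gaussianPDFReal 0 1 p.1 * gaussianPDFReal 0 1 p.2) *
          ((max p.1 0) ^ 2 * (max (ρ * p.1 + Real.sqrt (1 - ρ ^ 2) * p.2) 0) ^ 2) :=
        integral_gauss_prod _
    _ = ∫ p : ℝ × ℝ, ((2*π)⁻¹ * Real.exp (-(1/2:ℝ) * (p.1^2 + p.2^2))) *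
          ((max p.1 0) ^ 2 * (max (ρ * p.1 + Real.sqrt (1 - ρ ^ 2) * p.2) 0) ^ 2) := by
        congr 1
        funext p
        rw [pdf_prod]
    _ = ∫ p in polarCoord.target, p.1 •
          ((fun p : ℝ × ℝ => ((2*π)⁻¹ * Real.exp (-(1/2:ℝ) * (p.1^2 + p.2^2))) *
            ((max p.1 0) ^ 2 * (max (ρ * p.1 + Real.sqrt (1 - ρ ^ 2) * p.2) 0) ^ 2))
           (polarCoord.symm p)) :=
        (integral_comp_polarCoord_symm _).symm
    _ = ∫ p in Set.Ioi (0:ℝ) ×ˢ Set.Ioo (-π) π,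
          (p.1 ^ 5 * Real.exp (-(1/2:ℝ) * p.1 ^ 2)) *
          ((2*π)⁻¹ * ((max (Real.cos p.2) 0)^2 *
            (max (ρ * Real.cos p.2 + Real.sqrt (1 - ρ^2) * Real.sin p.2) 0)^2)) := by
        rw [show polarCoord.target = Set.Ioi (0:ℝ) ×ˢ Set.Ioo (-π) π from rfl]
        refine setIntegral_congr_fun (measurableSet_Ioi.prod measurableSet_Ioo) ?_
        rintro ⟨r, θ⟩ ⟨hr, -⟩
        have hr0 : (0:ℝ) ≤ r := le_of_lt hr
        have hsymm : polarCoord.symm (r, θ) = (r * Real.cos θ, r * Real.sin θ) := rfl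
        simp only [hsymm, smul_eq_mul]
        have e1 : max (r * Real.cos θ) 0 = r * max (Real.cos θ) 0 := by
          rw [mul_max_of_nonneg _ _ hr0, mul_zero]
        have ea : ρ * (r * Real.cos θ) + Real.sqrt (1 - ρ^2) * (r * Real.sin θ)
            = r * (ρ * Real.cos θ + Real.sqrt (1 - ρ^2) * Real.sin θ) := by ring
        have e2 : max (ρ * (r * Real.cos θ) + Real.sqrt (1 - ρ^2) * (r * Real.sin θ)) 0
            = r * max (ρ * Real.cos θ + Real.sqrt (1 - ρ^2) * Real.sin θ) 0 := by
          rw [ea, mul_max_of_nonneg _ _ hr0, mul_zero]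
        have e3 : Real.exp (-(1/2:ℝ) * ((r * Real.cos θ)^2 + (r * Real.sin θ)^2))
            = Real.exp (-(1/2:ℝ) * r^2) := by
          congr 1
          linear_combination (-(1/2:ℝ) * r^2) * (Real.sin_sq_add_cos_sq θ)
        rw [e1, e2, e3]
        ring
    _ = (∫ r in Set.Ioi (0:ℝ), r ^ 5 * Real.exp (-(1/2:ℝ) * r ^ 2)) *
        ∫ θ in Set.Ioo (-π) π, (2*π)⁻¹ * ((max (Real.cos θ) 0)^2 *
          (max (ρ * Real.cos θ + Real.sqrt (1 - ρ^2) * Real.sin θ) 0)^2) := by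
        rw [Measure.volume_eq_prod]
        exact setIntegral_prod_mul (L := ℝ)
          (fun r => r ^ 5 * Real.exp (-(1/2:ℝ) * r ^ 2))
          (fun θ => (2*π)⁻¹ * ((max (Real.cos θ) 0)^2 *
            (max (ρ * Real.cos θ + Real.sqrt (1 - ρ^2) * Real.sin θ) 0)^2)) _ _
    _ = 8 * ((2*π)⁻¹ * (((1 + 2*ρ^2) * (π - Real.arccos ρ) + 3*ρ*Real.sqrt (1 - ρ^2)) / 8)) := by
        rw [radial_int, integral_const_mul,
          angular_int hq2 hcos hsin hα0 hαπ]
    _ = (3 * ρ * Real.sqrt (1 - ρ ^ 2) + Real.arccos (-ρ) * (1 + 2 * ρ ^ 2)) / (2 * π) := by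
        rw [Real.arccos_neg]
        field_simp
        ring
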